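/- arXiv:1208.2427 — 4 statements merged into one kernel-verified Lean document; each statement's English description precedes it below -/
import Mathlib

section
/- Let G act sharply 2-transitively on Ω. Then any two involutions in G are conjugate in G. -/
def IsSharply2Transitive (G Ω : Type*) [Group G] [MulAction G Ω] : Prop :=
  ∀ x y z w : Ω, x ≠ y → z ≠ w → ∃! g : G, g • x = z ∧ g • y = w

lemma inv_sq_one {G : Type*} [Group G] {σ : G} (hσ : orderOf σ = 2) : σ * σ = 1 := by
  have := pow_orderOf_eq_one σ
  rwa [hσ, pow_two] at this

lemma inv_moves {G Ω : Type*} [Group G] [MulAction G Ω] [Nontrivial Ω]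
    (h : IsSharply2Transitive G Ω) {σ : G} (hσ : orderOf σ = 2) :
    ∃ x : Ω, σ • x ≠ x := by
  by_contra hc
  push_neg at hc
  obtain ⟨x, y, hxy⟩ := exists_pair_ne Ω
  obtain ⟨g, _, hg⟩ := h x y x y hxy hxy
  have h1 : σ = g := hg σ ⟨hc x, hc y⟩
  have h2 : (1 : G) = g := hg 1 ⟨one_smul _ _, one_smul _ _⟩
  have : σ = 1 := h1.trans h2.symm
  rw [this, orderOf_one] at hσ
  norm_num at hσ

theorem involutions_are_conjugate {G Ω : Type*} [Group G] [MulAction G Ω] [Nontrivial Ω]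
    (h : IsSharply2Transitive G Ω) (σ τ : G)
    (hσ : orderOf σ = 2) (hτ : orderOf τ = 2) :
    ∃ g : G, g⁻¹ * σ * g = τ := by
  obtain ⟨x, hx⟩ := inv_moves h hσ
  obtain ⟨y, hy⟩ := inv_moves h hτ
  have hσ2 : σ * σ = 1 := inv_sq_one hσ
  have hτ2 : τ * τ = 1 := inv_sq_one hτ
  obtain ⟨g, ⟨hg1, hg2⟩, _⟩ := h y (τ • y) x (σ • x) (Ne.symm hy) (Ne.symm hx)
  refine ⟨g, ?_⟩
  obtain ⟨k, _, hk⟩ := h y (τ • y) (τ • y) y (Ne.symm hy) hy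
  have e1 : τ = k := hk τ ⟨rfl, by rw [← mul_smul, hτ2, one_smul]⟩
  have e2 : g⁻¹ * σ * g = k := by
    apply hk
    constructor
    · rw [mul_smul, mul_smul, hg1, ← hg2, inv_smul_smul]
    · rw [mul_smul, mul_smul, hg2, smul_smul σ σ, hσ2, one_smul, ← hg1, inv_smul_smul]
  rw [e2, ← e1]
end

section
/- Let G act sharply 2-transitively on Ω and let σ, τ ∈ G be involutions with στ ≠ 1. Then the element στ acts on Ω without fixed points. -/
theorem prod_involutions_fixed_point_free {G Ω : Type*} [Group G] [MulAction G Ω]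
    [Nontrivial Ω] (h : IsSharply2Transitive G Ω) (σ τ : G)
    (hσ : orderOf σ = 2) (hτ : orderOf τ = 2) (hστ : σ * τ ≠ 1) :
    ∀ x : Ω, (σ * τ) • x ≠ x := by
  intro x hx
  have hσ2 : σ * σ = 1 := by
    have := pow_orderOf_eq_one σ
    rwa [hσ, pow_two] at this
  have hτ2 : τ * τ = 1 := by
    have := pow_orderOf_eq_one τ
    rwa [hτ, pow_two] at this
  have hσ1 : σ ≠ 1 := by
    intro h1; rw [h1, orderOf_one] at hσ; exact absurd hσ (by norm_num)
  have hτ1 : τ ≠ 1 := by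
    intro h1; rw [h1, orderOf_one] at hτ; exact absurd hτ (by norm_num)
  have hστne : σ ≠ τ := by
    intro h1; rw [h1, hτ2] at hστ; exact hστ rfl
  -- freeness: an element fixing two distinct points is trivial
  have free : ∀ (g : G) (p q : Ω), p ≠ q → g • p = p → g • q = q → g = 1 := by
    intro g p q hpq h1 h2
    obtain ⟨u, -, huniq⟩ := h p q p q hpq hpq
    rw [huniq g ⟨h1, h2⟩, huniq 1 ⟨one_smul _ _, one_smul _ _⟩]
  have hσy : σ • (τ • x) = x := by rw [← mul_smul]; exact hx
  have hσx : σ • x = τ • x := by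
    conv_lhs => rw [← hσy, ← mul_smul, hσ2, one_smul]
  by_cases hxy : τ • x = x
  · -- both σ and τ fix x
    have hσxx : σ • x = x := hσx.trans hxy
    obtain ⟨a, ha⟩ := exists_ne x
    have hsa : σ • a ≠ a := by
      intro h1
      exact hσ1 (free σ x a (Ne.symm ha) hσxx h1)
    have hta : τ • a ≠ a := by
      intro h1
      exact hτ1 (free τ x a (Ne.symm ha) hxy h1)
    obtain ⟨g, ⟨hg1, hg2⟩, -⟩ := h a (σ • a) a (τ • a) (Ne.symm hsa) (Ne.symm hta)
    have hginv : g⁻¹ • a = a := by rw [inv_smul_eq_iff]; exact hg1.symm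
    have hginv2 : g⁻¹ • (τ • a) = σ • a := by rw [inv_smul_eq_iff]; exact hg2.symm
    have hσσa : σ • (σ • a) = a := by rw [← mul_smul, hσ2, one_smul]
    have hconj : g * σ * g⁻¹ = τ := by
      obtain ⟨u, -, huniq⟩ := h a (τ • a) (τ • a) a (Ne.symm hta) hta
      have e1 : (g * σ * g⁻¹) • a = τ • a := by
        rw [mul_smul, mul_smul, hginv, hg2]
      have e2 : (g * σ * g⁻¹) • (τ • a) = a := by
        rw [mul_smul, mul_smul, hginv2, hσσa, hg1]
      have e3 : τ • (τ • a) = a := by rw [← mul_smul, hτ2, one_smul]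
      rw [huniq (g * σ * g⁻¹) ⟨e1, e2⟩, huniq τ ⟨rfl, e3⟩]
    have hτgx : τ • (g • x) = g • x := by
      rw [← hconj, mul_smul, mul_smul, inv_smul_smul, hσxx]
    have hgx : g • x = x := by
      by_contra hne
      exact hτ1 (free τ x (g • x) (Ne.symm hne) hxy hτgx)
    have hg : g = 1 := free g a x ha hg1 hgx
    rw [hg, one_mul, inv_one, mul_one] at hconj
    exact hστne hconj
  · -- σ and τ both swap x and τ•x
    obtain ⟨u, -, huniq⟩ := h x (τ • x) (τ • x) x (Ne.symm hxy) hxy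
    have hτy : τ • (τ • x) = x := by rw [← mul_smul, hτ2, one_smul]
    have := (huniq σ ⟨hσx, hσy⟩).trans (huniq τ ⟨rfl, hτy⟩).symm
    exact hστne this
end

section
/- Let G act sharply 2-transitively on Ω and suppose some point stabilizer G_ω contains an involution. Then the set of involutions of G, with G acting by conjugation, is a transitive G-set, and for each ω ∈ Ω the stabilizer G_ω equals the centralizer in G of the unique involution it contains. -/
section Aux

variable {G Ω : Type*} [Group G] [MulAction G Ω]

/-- An element fixing two distinct points is the identity. -/
theorem s2t_fix2 (h : IsSharply2Transitive G Ω) {g : G} {x y : Ω} (hxy : x ≠ y)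
    (hx : g • x = x) (hy : g • y = y) : g = 1 := by
  obtain ⟨u, -, huniq⟩ := h x y x y hxy hxy
  rw [huniq g ⟨hx, hy⟩, huniq 1 ⟨one_smul _ _, one_smul _ _⟩]

/-- Two elements agreeing on two distinct points are equal. -/
theorem s2t_agree2 (h : IsSharply2Transitive G Ω) {g g' : G} {x y : Ω} (hxy : x ≠ y)
    (hx : g • x = g' • x) (hy : g • y = g' • y) : g = g' := by
  obtain ⟨u, -, huniq⟩ := h x y (g • x) (g • y) hxy ((MulAction.injective g).ne hxy)
  rw [huniq g ⟨rfl, rfl⟩, huniq g' ⟨hx.symm, hy.symm⟩]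

/-- A nontrivial element moves some point. -/
theorem s2t_exists_moved (h : IsSharply2Transitive G Ω) [Nontrivial Ω] {σ : G} (hσ : σ ≠ 1) :
    ∃ α : Ω, σ • α ≠ α := by
  by_contra hc
  push_neg at hc
  obtain ⟨a, b, hab⟩ := exists_pair_ne Ω
  exact hσ (s2t_fix2 h hab (hc a) (hc b))

/-- Two elements of order dividing 2 that agree (nontrivially) on a point are equal. -/
theorem invol_eq_of_swap (h : IsSharply2Transitive G Ω) {σ τ : G} (hσ : σ * σ = 1)
    (hτ : τ * τ = 1) {β : Ω} (hmove : σ • β ≠ β) (heq : σ • β = τ • β) : σ = τ := by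
  apply s2t_agree2 h (Ne.symm hmove) heq
  have l : σ • σ • β = β := by rw [← mul_smul, hσ, one_smul]
  have r : τ • σ • β = β := by rw [heq, ← mul_smul, hτ, one_smul]
  rw [l, r]

end Aux

theorem conj_action_on_involutions {G Ω : Type*} [Group G] [MulAction G Ω] [Nontrivial Ω]
    (h : IsSharply2Transitive G Ω)
    (hinv : ∃ (ω : Ω) (σ : G), orderOf σ = 2 ∧ σ • ω = ω) :
    (∀ σ τ : G, orderOf σ = 2 → orderOf τ = 2 → ∃ g : G, g * σ * g⁻¹ = τ) ∧
    (∀ ω : Ω, ∃ σ : G, orderOf σ = 2 ∧ σ • ω = ω ∧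
      {g : G | g • ω = ω} = {g : G | g * σ = σ * g}) := by
  haveI : Fact (Nat.Prime 2) := ⟨Nat.prime_two⟩
  -- generic facts about elements of order 2
  have hsq : ∀ {σ : G}, orderOf σ = 2 → σ * σ = 1 := by
    intro σ hσ
    have := pow_orderOf_eq_one σ
    rwa [hσ, pow_two] at this
  have hne1 : ∀ {σ : G}, orderOf σ = 2 → σ ≠ 1 := by
    intro σ hσ e
    rw [e, orderOf_one] at hσ
    norm_num at hσ
  constructor
  · -- all involutions are conjugate
    intro σ τ hσ hτ
    obtain ⟨α, hα⟩ := s2t_exists_moved h (hne1 hσ)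
    obtain ⟨β, hβ⟩ := s2t_exists_moved h (hne1 hτ)
    obtain ⟨g, ⟨hg1, hg2⟩, -⟩ := h α (σ • α) β (τ • β) (Ne.symm hα) (Ne.symm hβ)
    refine ⟨g, ?_⟩
    have hval : (g * σ * g⁻¹) • β = τ • β := by
      have hig : g⁻¹ • β = α := by rw [← hg1, inv_smul_smul]
      rw [mul_smul, mul_smul, hig, hg2]
    have hcsq : (g * σ * g⁻¹) * (g * σ * g⁻¹) = 1 := by
      have e : (g * σ * g⁻¹) * (g * σ * g⁻¹) = g * (σ * σ) * g⁻¹ := by group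
      rw [e, hsq hσ, mul_one, mul_inv_cancel]
    exact invol_eq_of_swap h hcsq (hsq hτ) (hval ▸ hβ) hval
  · -- every point stabilizer is the centralizer of an involution it contains
    intro ω
    obtain ⟨ω₀, σ₀, hσ₀ord, hσ₀fix⟩ := hinv
    -- transport the involution σ₀ to one fixing ω
    obtain ⟨x, hx⟩ := exists_ne ω₀
    obtain ⟨y, hy⟩ := exists_ne ω
    obtain ⟨g, ⟨hg1, hg2⟩, -⟩ := h ω₀ x ω y (Ne.symm hx) (Ne.symm hy)
    refine ⟨g * σ₀ * g⁻¹, ?_, ?_, ?_⟩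
    case refine_1 =>
      apply orderOf_eq_prime
      · rw [pow_two]
        have e : (g * σ₀ * g⁻¹) * (g * σ₀ * g⁻¹) = g * (σ₀ * σ₀) * g⁻¹ := by group
        rw [e, hsq hσ₀ord, mul_one, mul_inv_cancel]
      · intro e
        apply hne1 hσ₀ord
        have e2 : σ₀ = g⁻¹ * (g * σ₀ * g⁻¹) * g := by group
        rw [e, mul_one] at e2
        rw [e2, inv_mul_cancel]
    case refine_2 =>
      have hω₀ : g⁻¹ • ω = ω₀ := by rw [← hg1, inv_smul_smul]
      rw [mul_smul, mul_smul, hω₀, hσ₀fix, hg1]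
    case refine_3 =>
      set σ : G := g * σ₀ * g⁻¹ with hσdef
      have hσsq : σ * σ = 1 := by
        have e : σ * σ = g * (σ₀ * σ₀) * g⁻¹ := by rw [hσdef]; group
        rw [e, hsq hσ₀ord, mul_one, mul_inv_cancel]
      have hσne : σ ≠ 1 := by
        intro e
        apply hne1 hσ₀ord
        have e2 : σ₀ = g⁻¹ * σ * g := by rw [hσdef]; group
        rw [e, mul_one] at e2
        rw [e2, inv_mul_cancel]
      have hσω : σ • ω = ω := by
        have hω₀ : g⁻¹ • ω = ω₀ := by rw [← hg1, inv_smul_smul]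
        rw [hσdef, mul_smul, mul_smul, hω₀, hσ₀fix, hg1]
      -- σ fixes only ω
      have honly : ∀ z : Ω, σ • z = z → z = ω := by
        intro z hz
        by_contra hzω
        exact hσne (s2t_fix2 h hzω hz hσω)
      ext j
      simp only [Set.mem_setOf_eq]
      constructor
      · -- stabilizer ⊆ centralizer
        intro hj
        obtain ⟨α, hα⟩ := exists_ne ω
        set β : Ω := j • α with hβdef
        have hβω : β ≠ ω := by
          intro e
          apply hα
          have e' : j • α = ω := by rw [← hβdef]; exact e
          have : j • α = j • ω := by rw [hj]; exact e'
          exact MulAction.injective j this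
        by_cases hβα : β = α
        · -- then j fixes two points, so j = 1
          have : j = 1 := s2t_fix2 h hα (hβdef ▸ hβα) hj
          rw [this, one_mul, mul_one]
        · -- construct c ∈ C(σ) with c • α = β; then j = c
          have hσα : σ • α ≠ α := fun e => hα (honly α e)
          have hσβ : σ • β ≠ β := fun e => hβω (honly β e)
          obtain ⟨c, ⟨hc1, hc2⟩, -⟩ := h α (σ • α) β (σ • β) (Ne.symm hσα) (Ne.symm hσβ)
          have hkey : c * σ * c⁻¹ = σ := by
            have hval : (c * σ * c⁻¹) • β = σ • β := by
              have hic : c⁻¹ • β = α := by rw [← hc1, inv_smul_smul]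
              rw [mul_smul, mul_smul, hic, hc2]
            have hcsq : (c * σ * c⁻¹) * (c * σ * c⁻¹) = 1 := by
              have e : (c * σ * c⁻¹) * (c * σ * c⁻¹) = c * (σ * σ) * c⁻¹ := by group
              rw [e, hσsq, mul_one, mul_inv_cancel]
            exact invol_eq_of_swap h hcsq hσsq (hval ▸ hσβ) hval
          have hcomm : c * σ = σ * c := by
            conv_rhs => rw [← hkey]
            group
          have hcω : c • ω = ω := by
            apply honly
            rw [← mul_smul, ← hcomm, mul_smul, hσω]
          have hjc : j = c := by
            have h1 : (c⁻¹ * j) • ω = ω := by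
              rw [mul_smul, hj, inv_smul_eq_iff]; exact hcω.symm
            have h2 : (c⁻¹ * j) • α = α := by
              rw [mul_smul, ← hβdef, inv_smul_eq_iff]; exact hc1.symm
            have := s2t_fix2 h (Ne.symm hα) h1 h2
            calc j = c * (c⁻¹ * j) := by group
            _ = c := by rw [this, mul_one]
          rw [hjc]
          exact hcomm
      · -- centralizer ⊆ stabilizer
        intro hc
        apply honly
        rw [← mul_smul, ← hc, mul_smul, hσω]
end

section
/- Let G act sharply 2-transitively on Ω. If some product of two distinct involutions of G is itself an involution, then no point stabilizer contains an involution. -/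
theorem no_fixed_involution_of_involutive_product {G Ω : Type*} [Group G] [MulAction G Ω]
    [Nontrivial Ω] (h : IsSharply2Transitive G Ω)
    (hprod : ∃ σ τ : G, σ ≠ τ ∧ orderOf σ = 2 ∧ orderOf τ = 2 ∧ orderOf (σ * τ) = 2) :
    ∀ (ω : Ω) (σ : G), orderOf σ = 2 → σ • ω ≠ ω := by
  intro ω σ₀ hσ₀ hfix
  obtain ⟨σ, τ, hne, hσ, hτ, hστ⟩ := hprod
  have key : ∀ g : G, orderOf g = 2 → g * g = 1 ∧ g ≠ 1 := by
    intro g hg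
    refine ⟨?_, ?_⟩
    · have hp := pow_orderOf_eq_one g
      rw [hg, pow_two] at hp; exact hp
    · intro h1; rw [h1, orderOf_one] at hg; exact absurd hg (by norm_num)
  have F1 : ∀ (g : G) (x y : Ω), x ≠ y → g • x = x → g • y = y → g = 1 := by
    intro g x y hxy hx hy
    exact (h x y x y hxy hxy).unique ⟨hx, hy⟩ ⟨one_smul G x, one_smul G y⟩
  obtain ⟨hσ₀2, hσ₀1⟩ := key σ₀ hσ₀
  obtain ⟨hσ2, hσ1⟩ := key σ hσ
  obtain ⟨hτ2, hτ1⟩ := key τ hτ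
  have moved : ∀ g : G, g ≠ 1 → ∃ x : Ω, g • x ≠ x := by
    intro g hg
    by_contra hc
    push_neg at hc
    obtain ⟨u, v, huv⟩ := exists_pair_ne Ω
    exact hg (F1 g u v huv (hc u) (hc v))
  -- every involution is conjugate to σ₀, hence has a fixed point
  have conjfix : ∀ g : G, g * g = 1 → g ≠ 1 → ∃ c : Ω, g • c = c := by
    intro g hg2 hg1
    obtain ⟨x, hx⟩ := moved g hg1
    obtain ⟨x₀, hx₀⟩ := moved σ₀ hσ₀1
    obtain ⟨γ, ⟨hγ1, hγ2⟩, -⟩ := h x₀ (σ₀ • x₀) x (g • x) (Ne.symm hx₀) (Ne.symm hx)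
    have hinv : γ⁻¹ • x = x₀ := by rw [← hγ1, inv_smul_smul]
    have e1 : (γ * σ₀ * γ⁻¹) • x = g • x := by
      rw [mul_smul, mul_smul, hinv, hγ2]
    have e3 : g • (g • x) = x := by rw [← mul_smul, hg2, one_smul]
    have pσ₀ : σ₀ • (σ₀ • x₀) = x₀ := by rw [← mul_smul, hσ₀2, one_smul]
    have e2 : (γ * σ₀ * γ⁻¹) • (g • x) = x := by
      rw [← hγ2, mul_smul, mul_smul, inv_smul_smul, pσ₀, hγ1]
    have huniq := (h x (g • x) (g • x) x (Ne.symm hx) hx).unique ⟨e1, e2⟩ ⟨rfl, e3⟩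
    refine ⟨γ • ω, ?_⟩
    rw [← huniq, mul_smul, mul_smul, inv_smul_smul, hfix]
  have hcomm : τ * σ = σ * τ := by
    have h1 := (key _ hστ).1
    have hσi : σ⁻¹ = σ := inv_eq_of_mul_eq_one_right hσ2
    have hτi : τ⁻¹ = τ := inv_eq_of_mul_eq_one_right hτ2
    have h2 : (σ * τ)⁻¹ = σ * τ := inv_eq_of_mul_eq_one_right h1
    calc τ * σ = τ⁻¹ * σ⁻¹ := by rw [hσi, hτi]
      _ = (σ * τ)⁻¹ := (mul_inv_rev σ τ).symm
      _ = σ * τ := h2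
  obtain ⟨b, hb⟩ := conjfix τ hτ2 hτ1
  -- σ and τ have the common fixed point b
  have hσb : σ • b = b := by
    have hτσb : τ • (σ • b) = σ • b := by
      rw [← mul_smul, hcomm, mul_smul, hb]
    by_contra hne'
    exact hτ1 (F1 τ (σ • b) b hne' hτσb hb)
  -- pick y₀ ≠ b
  obtain ⟨u, v, huv⟩ := exists_pair_ne Ω
  have hy₀ex : ∃ y₀ : Ω, y₀ ≠ b := by
    by_cases hu : u = b
    · refine ⟨v, ?_⟩; rw [hu] at huv; exact Ne.symm huv
    · exact ⟨u, hu⟩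
  obtain ⟨y₀, hy₀b⟩ := hy₀ex
  obtain ⟨π, ⟨hπ1, hπ2⟩, -⟩ := h b y₀ y₀ b (Ne.symm hy₀b) hy₀b
  have hπne : π ≠ 1 := by
    intro h1; rw [h1, one_smul] at hπ1; exact hy₀b hπ1.symm
  have hππ : π * π = 1 := by
    refine F1 (π * π) b y₀ (Ne.symm hy₀b) ?_ ?_
    · rw [mul_smul, hπ1, hπ2]
    · rw [mul_smul, hπ2, hπ1]
  obtain ⟨m, hm⟩ := conjfix π hππ hπne
  have hmb : b ≠ m := by
    intro h1
    have : π • b = b := by rw [h1]; exact hm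
    rw [hπ1] at this; exact hy₀b this
  obtain ⟨hstar, ⟨hs1, hs2⟩, hsu⟩ := h b m b y₀ hmb (Ne.symm hy₀b)
  -- main step: for any involution ρ fixing b, π * ρ * π = hstar * π * hstar⁻¹
  have main : ∀ ρ : G, ρ * ρ = 1 → ρ ≠ 1 → ρ • b = b →
      π * ρ * π = hstar * π * hstar⁻¹ := by
    intro ρ hρ2 hρ1 hρb
    have hgy₀ : (π * ρ * π) • y₀ = y₀ := by
      simp only [mul_smul]; rw [hπ2, hρb]; exact hπ1
    have hg2 : (π * ρ * π) * (π * ρ * π) = 1 := by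
      have e : (π * ρ * π) * (π * ρ * π) = π * ρ * (π * π) * ρ * π := by group
      rw [e, hππ, mul_one, mul_assoc π ρ ρ, hρ2, mul_one, hππ]
    have pp : ∀ z : Ω, π • (π • z) = z := by
      intro z; rw [← mul_smul, hππ, one_smul]
    have hρy₀ : ρ • y₀ ≠ y₀ := by
      intro h1; exact hρ1 (F1 ρ b y₀ (Ne.symm hy₀b) hρb h1)
    have hgb : (π * ρ * π) • b ≠ b := by
      intro h1
      have e : (π * ρ * π) • b = π • (ρ • y₀) := by
        simp only [mul_smul]; rw [hπ1]
      rw [e] at h1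
      have h2 : ρ • y₀ = π • b := by rw [← h1, pp]
      rw [hπ1] at h2; exact hρy₀ h2
    obtain ⟨h₁, ⟨hh1, hh2⟩, -⟩ := h b y₀ b ((π * ρ * π) • b) (Ne.symm hy₀b) (Ne.symm hgb)
    have p1 : h₁ • y₀ = π • (ρ • y₀) := by
      rw [hh2]; simp only [mul_smul]; rw [hπ1]
    have pρ : ρ • (ρ • y₀) = y₀ := by rw [← mul_smul, hρ2, one_smul]
    have hb1 : h₁⁻¹ • b = b := inv_smul_eq_iff.mpr hh1.symm
    have hw : (π * h₁⁻¹ * (π * ρ * π)) * h₁ = 1 := by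
      refine F1 _ b y₀ (Ne.symm hy₀b) ?_ ?_
      · simp only [mul_smul]
        rw [hh1, hπ1, ← p1, inv_smul_smul]; exact hπ2
      · simp only [mul_smul]
        rw [p1, pp (ρ • y₀), pρ, hπ2, hb1]; exact hπ1
    have hwh : π * h₁⁻¹ * (π * ρ * π) = h₁⁻¹ := by
      have := hw
      exact eq_inv_of_mul_eq_one_left this
    have hcancel : (h₁ * π) * (π * h₁⁻¹) = 1 := by
      have e : (h₁ * π) * (π * h₁⁻¹) = h₁ * (π * π) * h₁⁻¹ := by group
      rw [e, hππ, mul_one, mul_inv_cancel]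
    have final : π * ρ * π = h₁ * π * h₁⁻¹ := by
      calc π * ρ * π = ((h₁ * π) * (π * h₁⁻¹)) * (π * ρ * π) := by rw [hcancel, one_mul]
        _ = (h₁ * π) * (π * h₁⁻¹ * (π * ρ * π)) := by group
        _ = (h₁ * π) * h₁⁻¹ := by rw [hwh]
        _ = h₁ * π * h₁⁻¹ := by group
    have hfixm : (π * ρ * π) • (h₁ • m) = h₁ • m := by
      rw [final]; simp only [mul_smul]; rw [inv_smul_smul, hm]
    have hne2 : (π * ρ * π) ≠ 1 := by
      intro h1; exact hgb (by rw [h1, one_smul])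
    have hm_y : h₁ • m = y₀ := by
      by_contra hne3
      exact hne2 (F1 _ y₀ (h₁ • m) (Ne.symm hne3) hgy₀ hfixm)
    have hh : h₁ = hstar := hsu h₁ ⟨hh1, hm_y⟩
    rw [final, hh]
  have e1 := main σ hσ2 hσ1 hσb
  have e2 := main τ hτ2 hτ1 hb
  have e3 : π * σ * π = π * τ * π := e1.trans e2.symm
  have e4 : π * σ = π * τ := mul_right_cancel e3
  exact hne (mul_left_cancel e4)
end
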